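/- Let q be a prime power and F a finite field with q² elements, and write x̄ = x^q for the Frobenius automorphism of F over its subfield with q elements. In SL₂(F), the three subgroups H₁ = {[[1, x], [0, 1]] : x ∈ F}, H₂ = {[[1, 0], [y, 1]] : y ∈ F}, and H₃ = SU₂(F_q) = {[[a, b], [−b̄, ā]] : a, b ∈ F, a·ā + b·b̄ = 1} satisfy the triple product property, with |H₁| = |H₂| = q² and |H₃| = q³ − q. Consequently, SL₂(F_{q²}), a group of order q⁶ − q², realizes ⟨q², q², q³ − q⟩. -/

import Mathlib

/-- The right quotient set `Q(S) = {s₁s₂⁻¹ : s₁, s₂ ∈ S}` of a subset of a group. -/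
def rightQuotient {G : Type*} [Group G] (S : Set G) : Set G :=
  {g | ∃ s₁ ∈ S, ∃ s₂ ∈ S, g = s₁ * s₂⁻¹}

/-- Subsets `S₁, S₂, S₃` of a group satisfy the triple product property if whenever
`qᵢ ∈ Q(Sᵢ)` and `q₁q₂q₃ = 1`, we have `q₁ = q₂ = q₃ = 1`. -/
def TPP {G : Type*} [Group G] (S₁ S₂ S₃ : Set G) : Prop :=
  ∀ q₁ ∈ rightQuotient S₁, ∀ q₂ ∈ rightQuotient S₂, ∀ q₃ ∈ rightQuotient S₃,
    q₁ * q₂ * q₃ = 1 → q₁ = 1 ∧ q₂ = 1 ∧ q₃ = 1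

/-- A group `G` realizes `⟨n₁, n₂, n₃⟩` if there are finite subsets `Sᵢ ⊆ G` with
`|Sᵢ| = nᵢ` satisfying the triple product property. -/
def Realizes (G : Type*) [Group G] (n₁ n₂ n₃ : ℕ) : Prop :=
  ∃ S₁ S₂ S₃ : Set G, S₁.Finite ∧ S₂.Finite ∧ S₃.Finite ∧
    S₁.ncard = n₁ ∧ S₂.ncard = n₂ ∧ S₃.ncard = n₃ ∧ TPP S₁ S₂ S₃

/-- The subgroup (as a set) of upper unitriangular matrices in `SL₂(F)`. -/
def sl2H₁ (F : Type*) [Field F] : Set (Matrix.SpecialLinearGroup (Fin 2) F) :=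
  {M | ∃ x : F, (M : Matrix (Fin 2) (Fin 2) F) = !![1, x; 0, 1]}

/-- The subgroup (as a set) of lower unitriangular matrices in `SL₂(F)`. -/
def sl2H₂ (F : Type*) [Field F] : Set (Matrix.SpecialLinearGroup (Fin 2) F) :=
  {M | ∃ y : F, (M : Matrix (Fin 2) (Fin 2) F) = !![1, 0; y, 1]}

/-- The special unitary group `SU₂(F_q)` (as a subset of `SL₂(F_{q²})`), where the
Frobenius `x ↦ x^q` plays the role of conjugation. -/
def su2 (F : Type*) [Field F] (q : ℕ) : Set (Matrix.SpecialLinearGroup (Fin 2) F) :=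
  {M | ∃ a b : F, a * a ^ q + b * b ^ q = 1 ∧
    (M : Matrix (Fin 2) (Fin 2) F) = !![a, b; -(b ^ q), a ^ q]}

/-! ### Auxiliary lemmas -/

section Frob
variable {q : ℕ} {F : Type*} [Field F] [Fintype F]

lemma frob_charP (hq : IsPrimePow q) (hF : Fintype.card F = q ^ 2) :
    ∃ p n : ℕ, p.Prime ∧ 0 < n ∧ q = p ^ n ∧ CharP F p := by
  obtain ⟨p, n, hp, hn, rfl⟩ := hq
  haveI : CharP F (ringChar F) := ringChar.charP F
  obtain ⟨m, hrp, hcard⟩ := FiniteField.card F (ringChar F)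
  have hpr : p = ringChar F := by
    have hdvd : p ∣ ringChar F ^ (m : ℕ) := by
      rw [← hcard, hF]
      exact dvd_pow (dvd_pow_self p hn.ne') (by positivity)
    exact (Nat.prime_dvd_prime_iff_eq hp.nat_prime hrp).mp (hp.nat_prime.dvd_of_dvd_pow hdvd)
  exact ⟨p, n, hp.nat_prime, hn, rfl, hpr ▸ inferInstance⟩

lemma frob_add (hq : IsPrimePow q) (hF : Fintype.card F = q ^ 2) (x y : F) :
    (x + y) ^ q = x ^ q + y ^ q := by
  obtain ⟨p, n, hp, hn, rfl, hchar⟩ := frob_charP hq hF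
  haveI := Fact.mk hp
  exact add_pow_char_pow x y p n

lemma frob_neg (hq : IsPrimePow q) (hF : Fintype.card F = q ^ 2) (x : F) :
    (-x) ^ q = -(x ^ q) := by
  have := frob_add hq hF x (-x)
  rw [add_neg_cancel, zero_pow hq.ne_zero] at this
  exact (neg_eq_of_add_eq_zero_right this.symm).symm

lemma frob_sub (hq : IsPrimePow q) (hF : Fintype.card F = q ^ 2) (x y : F) :
    (x - y) ^ q = x ^ q - y ^ q := by
  rw [sub_eq_add_neg, frob_add hq hF, frob_neg hq hF, sub_eq_add_neg]

lemma frob_frob (hF : Fintype.card F = q ^ 2) (x : F) : (x ^ q) ^ q = x := by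
  rw [← pow_mul, ← sq, ← hF, FiniteField.pow_card]

lemma frob_fix (hF : Fintype.card F = q ^ 2) (a : F) :
    (a ^ (q + 1)) ^ q = a ^ (q + 1) := by
  rw [← pow_mul]
  have h1 : (q + 1) * q = q ^ 2 + q := by ring
  rw [h1, pow_add, ← hF, FiniteField.pow_card, pow_succ, mul_comm]

lemma exists_prim (hq : IsPrimePow q) (hF : Fintype.card F = q ^ 2) :
    ∃ ζ : F, IsPrimitiveRoot ζ (q + 1) := by
  classical
  have h2 : 2 ≤ q := hq.two_le
  obtain ⟨g, hg⟩ := IsCyclic.exists_generator (α := Fˣ)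
  have hord : orderOf g = q ^ 2 - 1 := by
    rw [orderOf_eq_card_of_forall_mem_zpowers hg, Nat.card_eq_fintype_card,
      Fintype.card_units, hF]
  have hfact : (q - 1) * (q + 1) = q ^ 2 - 1 := by
    obtain ⟨m, rfl⟩ := Nat.exists_eq_add_of_le h2
    have h1 : (2 + m) ^ 2 = m ^ 2 + 4 * m + 4 := by ring
    have h3 : (m + 1) * (m + 3) = m ^ 2 + 4 * m + 3 := by ring
    have e1 : 2 + m - 1 = m + 1 := by omega
    have e2 : 2 + m + 1 = m + 3 := by omega
    rw [e1, e2, h3]; omega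
  refine ⟨((g ^ (q - 1) : Fˣ) : F), ?_⟩
  rw [IsPrimitiveRoot.coe_units_iff]
  have : orderOf (g ^ (q - 1)) = q + 1 := by
    rw [orderOf_pow, hord, ← hfact]
    have hg1 : ((q - 1) * (q + 1)).gcd (q - 1) = q - 1 :=
      Nat.gcd_eq_right (dvd_mul_right _ _)
    rw [hg1, Nat.mul_div_cancel_left _ (by omega : 0 < q - 1)]
  exact this ▸ IsPrimitiveRoot.orderOf _

lemma root_count_one (hq : IsPrimePow q) (hF : Fintype.card F = q ^ 2) :
    {x : F | x ^ (q + 1) = 1}.ncard = q + 1 := by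
  obtain ⟨ζ, hζ⟩ := exists_prim hq hF
  have : {x : F | x ^ (q + 1) = 1} = ↑(Polynomial.nthRootsFinset (q + 1) (1 : F)) := by
    ext x
    simp [Polynomial.mem_nthRootsFinset (Nat.succ_pos q)]
  rw [this, Set.ncard_coe_finset, hζ.card_nthRootsFinset]

lemma exists_root (hq : IsPrimePow q) (hF : Fintype.card F = q ^ 2) (c : F)
    (hc0 : c ≠ 0) (hc : c ^ q = c) : ∃ α : F, α ^ (q + 1) = c := by
  classical
  have h2 : 2 ≤ q := hq.two_le
  obtain ⟨g, hg⟩ := IsCyclic.exists_generator (α := Fˣ)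
  have hord : orderOf g = q ^ 2 - 1 := by
    rw [orderOf_eq_card_of_forall_mem_zpowers hg, Nat.card_eq_fintype_card,
      Fintype.card_units, hF]
  set cu : Fˣ := Units.mk0 c hc0 with hcu
  obtain ⟨m, hm⟩ := mem_powers_iff_mem_zpowers.mpr (hg cu)
  simp only [] at hm
  have hcq : cu ^ (q - 1) = 1 := by
    have hcq' : c ^ (q - 1) = 1 := by
      have : c ^ (q - 1) * c = 1 * c := by
        rw [← pow_succ, one_mul]; rwa [Nat.sub_add_cancel (by omega)]
      exact mul_right_cancel₀ hc0 this
    ext; push_cast; exact hcq'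
  have hdvd : (q + 1) ∣ m := by
    have h1 : orderOf g ∣ m * (q - 1) := by
      apply orderOf_dvd_of_pow_eq_one
      rw [pow_mul, hm, hcq]
    rw [hord] at h1
    have hfact : (q + 1) * (q - 1) = q ^ 2 - 1 := by
      obtain ⟨m, rfl⟩ := Nat.exists_eq_add_of_le h2
      have hx1 : (2 + m) ^ 2 = m ^ 2 + 4 * m + 4 := by ring
      have hx3 : (m + 3) * (m + 1) = m ^ 2 + 4 * m + 3 := by ring
      have e1 : 2 + m - 1 = m + 1 := by omega
      have e2 : 2 + m + 1 = m + 3 := by omega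
      rw [e1, e2, hx3]; omega
    rw [← hfact] at h1
    obtain ⟨t, ht⟩ := h1
    have : m * (q - 1) = ((q + 1) * t) * (q - 1) := by rw [ht]; ring
    exact ⟨t, Nat.eq_of_mul_eq_mul_right (by omega) this⟩
  obtain ⟨t, rfl⟩ := hdvd
  refine ⟨((g ^ t : Fˣ) : F), ?_⟩
  have : (g ^ t) ^ (q + 1) = cu := by rw [← pow_mul, mul_comm, hm]
  calc ((g ^ t : Fˣ) : F) ^ (q + 1) = (((g ^ t) ^ (q + 1) : Fˣ) : F) := by push_cast; ring
    _ = c := by rw [this]; rfl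

lemma root_count (hq : IsPrimePow q) (hF : Fintype.card F = q ^ 2) (c : F)
    (hc0 : c ≠ 0) (hc : c ^ q = c) : {x : F | x ^ (q + 1) = c}.ncard = q + 1 := by
  obtain ⟨α, hα⟩ := exists_root hq hF c hc0 hc
  have hα0 : α ≠ 0 := by rintro rfl; exact hc0 (by rw [← hα, zero_pow (Nat.succ_ne_zero q)])
  have himg : {x : F | x ^ (q + 1) = c} = (fun x => x * α) '' {x : F | x ^ (q + 1) = 1} := by
    ext y
    constructor
    · intro hy
      simp only [Set.mem_setOf_eq] at hy
      refine ⟨y * α⁻¹, ?_, by field_simp⟩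
      simp only [Set.mem_setOf_eq]
      rw [mul_pow, inv_pow, hα, hy, mul_inv_cancel₀ hc0]
    · rintro ⟨x, hx, rfl⟩
      simp only [Set.mem_setOf_eq] at hx ⊢
      rw [mul_pow, hx, one_mul, hα]
  rw [himg, Set.ncard_image_of_injective _ (mul_left_injective₀ hα0), root_count_one hq hF]

omit [Fintype F] in
lemma zero_root_count : {x : F | x ^ (q + 1) = (0 : F)}.ncard = 1 := by
  have : {x : F | x ^ (q + 1) = (0 : F)} = {0} := by
    ext x; simp [pow_eq_zero_iff (Nat.succ_ne_zero q)]
  rw [this, Set.ncard_singleton]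

lemma pair_count (hq : IsPrimePow q) (hF : Fintype.card F = q ^ 2) :
    Nat.card {p : F × F // p.1 ^ (q + 1) + p.2 ^ (q + 1) = 1} = q ^ 3 - q := by
  classical
  have h2 : 2 ≤ q := hq.two_le
  have e : {p : F × F // p.1 ^ (q + 1) + p.2 ^ (q + 1) = 1} ≃
      Σ a : F, {b : F // b ^ (q + 1) = 1 - a ^ (q + 1)} :=
    { toFun := fun p => ⟨p.1.1, p.1.2, eq_sub_of_add_eq' p.2⟩
      invFun := fun x => ⟨(x.1, x.2.1), by
        show x.1 ^ (q + 1) + (x.2.1 : F) ^ (q + 1) = 1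
        rw [x.2.2]; ring⟩
      left_inv := fun p => rfl
      right_inv := fun x => rfl }
  rw [Nat.card_congr e, Nat.card_eq_fintype_card, Fintype.card_sigma]
  have key : ∀ a : F, Fintype.card {b : F // b ^ (q + 1) = 1 - a ^ (q + 1)} =
      if a ^ (q + 1) = 1 then 1 else q + 1 := by
    intro a
    rw [← Nat.card_eq_fintype_card,
      show Nat.card {b : F // b ^ (q + 1) = 1 - a ^ (q + 1)} =
        {b : F | b ^ (q + 1) = 1 - a ^ (q + 1)}.ncard from (Nat.card_coe_set_eq _).symm]
    split_ifs with h
    · rw [h, sub_self]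
      exact zero_root_count
    · have hc0 : (1 : F) - a ^ (q + 1) ≠ 0 := sub_ne_zero.mpr (Ne.symm h)
      have hcq : ((1 : F) - a ^ (q + 1)) ^ q = 1 - a ^ (q + 1) := by
        have h1 : (1 : F) - a ^ (q + 1) = 1 + (-(a ^ (q + 1))) := by ring
        rw [h1, frob_add hq hF, one_pow, frob_neg hq hF, frob_fix hF]
      exact root_count hq hF _ hc0 hcq
  rw [Finset.sum_congr rfl fun a _ => key a, Finset.sum_ite, Finset.sum_const,
    Finset.sum_const, smul_eq_mul, smul_eq_mul]
  have hA : (Finset.univ.filter fun a : F => a ^ (q + 1) = 1).card = q + 1 := by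
    have h1 := root_count_one hq hF
    rwa [Set.ncard_eq_toFinset_card', Set.toFinset_setOf] at h1
  have hB : (Finset.univ.filter fun a : F => ¬(a ^ (q + 1) = 1)).card = q ^ 2 - (q + 1) := by
    have := Finset.card_filter_add_card_filter_not
      (s := (Finset.univ : Finset F)) (p := fun a : F => a ^ (q + 1) = 1)
    rw [Finset.card_univ, hF] at this
    omega
  rw [hA, hB]
  obtain ⟨m, rfl⟩ := Nat.exists_eq_add_of_le h2
  have hx0 : (2 + m) ^ 2 = m ^ 2 + 4 * m + 4 := by ring
  have hx1 : (m ^ 2 + 3 * m + 1) * (2 + m + 1) = m ^ 3 + 6 * m ^ 2 + 10 * m + 3 := by ring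
  have hx2 : (2 + m) ^ 3 = m ^ 3 + 6 * m ^ 2 + 12 * m + 8 := by ring
  have e1 : (2 + m) ^ 2 - (2 + m + 1) = m ^ 2 + 3 * m + 1 := by omega
  rw [e1, hx1]
  omega

end Frob

/-! ### The subgroups -/

section Matrices

variable {q : ℕ} {F : Type*} [Field F] [Fintype F]

open Matrix

lemma rightQuotient_subgroup {G : Type*} [Group G] (K : Subgroup G) :
    rightQuotient (K : Set G) ⊆ (K : Set G) := by
  rintro g ⟨s₁, h₁, s₂, h₂, rfl⟩
  exact K.mul_mem h₁ (K.inv_mem h₂)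

/-- `sl2H₁` as a subgroup. -/
def sl2K₁ (F : Type*) [Field F] : Subgroup (Matrix.SpecialLinearGroup (Fin 2) F) where
  carrier := sl2H₁ F
  one_mem' := ⟨0, by rw [Matrix.SpecialLinearGroup.coe_one, Matrix.one_fin_two]⟩
  mul_mem' := by
    rintro A B ⟨x, hx⟩ ⟨y, hy⟩
    refine ⟨x + y, ?_⟩
    rw [Matrix.SpecialLinearGroup.coe_mul, hx, hy, Matrix.mul_fin_two]
    congr 1 <;> ring_nf
  inv_mem' := by
    rintro A ⟨x, hx⟩
    refine ⟨-x, ?_⟩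
    rw [Matrix.SpecialLinearGroup.coe_inv, hx, Matrix.adjugate_fin_two_of]
    norm_num

/-- `sl2H₂` as a subgroup. -/
def sl2K₂ (F : Type*) [Field F] : Subgroup (Matrix.SpecialLinearGroup (Fin 2) F) where
  carrier := sl2H₂ F
  one_mem' := ⟨0, by rw [Matrix.SpecialLinearGroup.coe_one, Matrix.one_fin_two]⟩
  mul_mem' := by
    rintro A B ⟨x, hx⟩ ⟨y, hy⟩
    refine ⟨x + y, ?_⟩
    rw [Matrix.SpecialLinearGroup.coe_mul, hx, hy, Matrix.mul_fin_two]
    congr 1 <;> ring_nf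
  inv_mem' := by
    rintro A ⟨x, hx⟩
    refine ⟨-x, ?_⟩
    rw [Matrix.SpecialLinearGroup.coe_inv, hx, Matrix.adjugate_fin_two_of]
    norm_num

/-- `su2` as a subgroup. -/
def sl2K₃ (hq : IsPrimePow q) (hF : Fintype.card F = q ^ 2) :
    Subgroup (Matrix.SpecialLinearGroup (Fin 2) F) where
  carrier := su2 F q
  one_mem' := by
    refine ⟨1, 0, by rw [one_pow, zero_pow hq.ne_zero]; ring, ?_⟩
    rw [Matrix.SpecialLinearGroup.coe_one, Matrix.one_fin_two, zero_pow hq.ne_zero,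
      one_pow, neg_zero]
  mul_mem' := by
    rintro A B ⟨a, b, hab, hA⟩ ⟨c, d, hcd, hB⟩
    refine ⟨a * c - b * d ^ q, a * d + b * c ^ q, ?_, ?_⟩
    · have e1 : (a * c - b * d ^ q) ^ q = a ^ q * c ^ q - b ^ q * d := by
        rw [frob_sub hq hF, mul_pow, mul_pow, frob_frob hF]
      have e2 : (a * d + b * c ^ q) ^ q = a ^ q * d ^ q + b ^ q * c := by
        rw [frob_add hq hF, mul_pow, mul_pow, frob_frob hF]
      rw [e1, e2]
      linear_combination (c * c ^ q + d * d ^ q) * hab + hcd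
    · rw [Matrix.SpecialLinearGroup.coe_mul, hA, hB, Matrix.mul_fin_two]
      have e1 : (a * c - b * d ^ q) ^ q = a ^ q * c ^ q - b ^ q * d := by
        rw [frob_sub hq hF, mul_pow, mul_pow, frob_frob hF]
      have e2 : (a * d + b * c ^ q) ^ q = a ^ q * d ^ q + b ^ q * c := by
        rw [frob_add hq hF, mul_pow, mul_pow, frob_frob hF]
      rw [e1, e2]
      congr 1 <;> ring_nf
  inv_mem' := by
    rintro A ⟨a, b, hab, hA⟩
    refine ⟨a ^ q, -b, ?_, ?_⟩
    · rw [frob_frob hF, frob_neg hq hF]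
      linear_combination hab
    · rw [Matrix.SpecialLinearGroup.coe_inv, hA, Matrix.adjugate_fin_two_of,
        frob_neg hq hF, frob_frob hF, neg_neg]

end Matrices

/-! ### Cardinalities -/

section Cards

variable {q : ℕ} {F : Type*} [Field F] [Fintype F]

open Matrix

omit [Fintype F] in
lemma sl2H₁_equiv : Nat.card (sl2H₁ F) = Nat.card F := by
  refine Nat.card_congr (Equiv.symm ?_)
  refine
    { toFun := fun x => ⟨⟨!![1, x; 0, 1], by rw [Matrix.det_fin_two_of]; ring⟩, ⟨x, rfl⟩⟩
      invFun := fun M => (M.1 : Matrix (Fin 2) (Fin 2) F) 0 1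
      left_inv := fun x => by simp
      right_inv := fun M => ?_ }
  obtain ⟨x, hx⟩ := M.2
  apply Subtype.ext; apply Subtype.ext
  show (!![1, (M.1 : Matrix (Fin 2) (Fin 2) F) 0 1; 0, 1] : Matrix (Fin 2) (Fin 2) F) = _
  rw [hx]
  norm_num

omit [Fintype F] in
lemma sl2H₂_equiv : Nat.card (sl2H₂ F) = Nat.card F := by
  refine Nat.card_congr (Equiv.symm ?_)
  refine
    { toFun := fun x => ⟨⟨!![1, 0; x, 1], by rw [Matrix.det_fin_two_of]; ring⟩, ⟨x, rfl⟩⟩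
      invFun := fun M => (M.1 : Matrix (Fin 2) (Fin 2) F) 1 0
      left_inv := fun x => by simp
      right_inv := fun M => ?_ }
  obtain ⟨x, hx⟩ := M.2
  apply Subtype.ext; apply Subtype.ext
  show (!![1, 0; (M.1 : Matrix (Fin 2) (Fin 2) F) 1 0, 1] : Matrix (Fin 2) (Fin 2) F) = _
  rw [hx]
  norm_num

lemma sl2H₁_ncard (hF : Fintype.card F = q ^ 2) : (sl2H₁ F).ncard = q ^ 2 := by
  rw [← Nat.card_coe_set_eq, sl2H₁_equiv, Nat.card_eq_fintype_card, hF]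

lemma sl2H₂_ncard (hF : Fintype.card F = q ^ 2) : (sl2H₂ F).ncard = q ^ 2 := by
  rw [← Nat.card_coe_set_eq, sl2H₂_equiv, Nat.card_eq_fintype_card, hF]

omit [Fintype F] in
lemma pow_q_succ (a : F) : a ^ (q + 1) = a * a ^ q := by
  rw [pow_succ]; ring

lemma su2_ncard (hq : IsPrimePow q) (hF : Fintype.card F = q ^ 2) :
    (su2 F q).ncard = q ^ 3 - q := by
  rw [← Nat.card_coe_set_eq, ← pair_count hq hF]
  refine Nat.card_congr (Equiv.symm ?_)
  refine
    { toFun := fun p => ⟨⟨!![p.1.1, p.1.2; -(p.1.2 ^ q), p.1.1 ^ q], by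
        rw [Matrix.det_fin_two_of]
        have h := p.2
        rw [pow_q_succ, pow_q_succ] at h
        linear_combination h⟩,
        ⟨p.1.1, p.1.2, by rw [← pow_q_succ, ← pow_q_succ]; exact p.2, rfl⟩⟩
      invFun := fun M => ⟨((M.1 : Matrix (Fin 2) (Fin 2) F) 0 0,
          (M.1 : Matrix (Fin 2) (Fin 2) F) 0 1), ?_⟩
      left_inv := fun p => by
        apply Subtype.ext
        show ((_ : Matrix (Fin 2) (Fin 2) F) 0 0, (_ : Matrix (Fin 2) (Fin 2) F) 0 1) = p.1
        norm_num
      right_inv := fun M => ?_ }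
  · obtain ⟨a, b, hab, hM⟩ := M.2
    rw [hM]
    norm_num
    rw [← pow_q_succ, ← pow_q_succ] at hab
    exact hab
  · obtain ⟨a, b, hab, hM⟩ := M.2
    apply Subtype.ext; apply Subtype.ext
    show (!![(M.1 : Matrix (Fin 2) (Fin 2) F) 0 0, (M.1 : Matrix (Fin 2) (Fin 2) F) 0 1;
      -((M.1 : Matrix (Fin 2) (Fin 2) F) 0 1 ^ q),
      (M.1 : Matrix (Fin 2) (Fin 2) F) 0 0 ^ q] : Matrix (Fin 2) (Fin 2) F) = _
    rw [hM]
    norm_num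

lemma cube_arith {k : ℕ} (hk2 : 2 ≤ k) :
    (k ^ 2 - 1) * (k ^ 2 - k) = (k - 1) * (k ^ 3 - k) := by
  obtain ⟨m, rfl⟩ := Nat.exists_eq_add_of_le hk2
  have hx0 : (2 + m) ^ 2 = m ^ 2 + 4 * m + 4 := by ring
  have hx1 : (2 + m) ^ 3 = m ^ 3 + 6 * m ^ 2 + 12 * m + 8 := by ring
  have e1 : (2 + m) ^ 2 - 1 = m ^ 2 + 4 * m + 3 := by omega
  have e2 : (2 + m) ^ 2 - (2 + m) = m ^ 2 + 3 * m + 2 := by omega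
  have e3 : (2 + m) ^ 3 - (2 + m) = m ^ 3 + 6 * m ^ 2 + 11 * m + 6 := by omega
  have e4 : 2 + m - 1 = m + 1 := by omega
  rw [e1, e2, e3, e4]
  ring

lemma card_SL2 :
    Nat.card (Matrix.SpecialLinearGroup (Fin 2) F) = Fintype.card F ^ 3 - Fintype.card F := by
  classical
  set k := Fintype.card F with hk
  have hk2 : 2 ≤ k := Fintype.one_lt_card
  set φ := Matrix.GeneralLinearGroup.det (n := Fin 2) (R := F) with hφ
  have hsurj : Function.Surjective φ := by
    intro u
    have hdet : Matrix.det !![(u : F), 0; 0, 1] ≠ 0 := by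
      rw [Matrix.det_fin_two_of]
      simpa using u.ne_zero
    refine ⟨Matrix.GeneralLinearGroup.mkOfDetNeZero _ hdet, ?_⟩
    ext
    rw [Matrix.GeneralLinearGroup.val_det_apply]
    show Matrix.det !![(u : F), 0; 0, 1] = _
    rw [Matrix.det_fin_two_of]
    ring
  have e : Matrix.SpecialLinearGroup (Fin 2) F ≃ φ.ker :=
    { toFun := fun A => ⟨Matrix.SpecialLinearGroup.toGL A, by
        have : φ (Matrix.SpecialLinearGroup.toGL A) = 1 := by
          ext
          rw [Matrix.GeneralLinearGroup.val_det_apply]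
          exact A.2
        exact this⟩
      invFun := fun B => ⟨((B.1 : GL (Fin 2) F) : Matrix (Fin 2) (Fin 2) F), by
        have h1 : φ B.1 = 1 := B.2
        have := congrArg (Units.val) h1
        rwa [Matrix.GeneralLinearGroup.val_det_apply] at this⟩
      left_inv := fun A => Subtype.ext rfl
      right_inv := fun B => Subtype.ext (Units.ext rfl) }
  have hcard := Subgroup.card_eq_card_quotient_mul_card_subgroup φ.ker
  have hquot : Nat.card (GL (Fin 2) F ⧸ φ.ker) = k - 1 := by
    rw [Nat.card_congr (QuotientGroup.quotientKerEquivOfSurjective φ hsurj).toEquiv,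
      Nat.card_eq_fintype_card, Fintype.card_units]
  have hGL : Nat.card (GL (Fin 2) F) = (k ^ 2 - 1) * (k ^ 2 - k) := by
    rw [Matrix.card_GL_field, Fin.prod_univ_two]
    norm_num
    rfl
  rw [hGL, hquot, ← Nat.card_congr e] at hcard
  set c := Nat.card (Matrix.SpecialLinearGroup (Fin 2) F) with hc
  rw [cube_arith hk2] at hcard
  exact (Nat.eq_of_mul_eq_mul_left (by omega : 0 < k - 1) hcard.symm)

end Cards

/-! ### The triple product property -/

section TPPsec

variable {q : ℕ} {F : Type*} [Field F] [Fintype F]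

open Matrix

lemma tpp_hold (hq : IsPrimePow q) (hF : Fintype.card F = q ^ 2) :
    TPP (sl2H₁ F) (sl2H₂ F) (su2 F q) := by
  intro g₁ hg₁ g₂ hg₂ g₃ hg₃ heq
  replace hg₁ : g₁ ∈ sl2H₁ F := rightQuotient_subgroup (sl2K₁ F) hg₁
  replace hg₂ : g₂ ∈ sl2H₂ F := rightQuotient_subgroup (sl2K₂ F) hg₂
  replace hg₃ : g₃ ∈ su2 F q := rightQuotient_subgroup (sl2K₃ hq hF) hg₃
  obtain ⟨x, hx⟩ := hg₁
  obtain ⟨y, hy⟩ := hg₂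
  obtain ⟨a, b, hab, hm⟩ := hg₃
  have h3 : g₃ = (g₁ * g₂)⁻¹ := eq_inv_of_mul_eq_one_right heq
  have hprod : ((g₁ * g₂ : Matrix.SpecialLinearGroup (Fin 2) F) : Matrix (Fin 2) (Fin 2) F) =
      !![1 + x * y, x; y, 1] := by
    rw [Matrix.SpecialLinearGroup.coe_mul, hx, hy, Matrix.mul_fin_two]
    congr 1 <;> ring_nf
  have hmat : (!![a, b; -(b ^ q), a ^ q] : Matrix (Fin 2) (Fin 2) F) =
      !![1, -x; -y, 1 + x * y] := by
    rw [← hm, h3, Matrix.SpecialLinearGroup.coe_inv, hprod, Matrix.adjugate_fin_two_of]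
  have e00 : a = 1 := by simpa using congrFun (congrFun hmat 0) 0
  have e01 : b = -x := by simpa using congrFun (congrFun hmat 0) 1
  have e10 : -(b ^ q) = -y := by simpa using congrFun (congrFun hmat 1) 0
  have e11 : a ^ q = 1 + x * y := by simpa using congrFun (congrFun hmat 1) 1
  rw [e00, one_pow] at e11
  have hxy : x * y = 0 := by linear_combination -e11
  have hyb : y = b ^ q := (neg_inj.mp e10).symm
  have hx0 : x = 0 ∧ y = 0 := by
    rcases mul_eq_zero.mp hxy with h | h
    · refine ⟨h, ?_⟩
      rw [hyb, e01, h, neg_zero, zero_pow hq.ne_zero]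
    · refine ⟨?_, h⟩
      rw [h] at hyb
      have hb : b = 0 := by
        have := hyb.symm
        exact pow_eq_zero_iff hq.ne_zero |>.mp this
      rw [hb] at e01
      exact (neg_eq_zero.mp e01.symm)
  obtain ⟨hX, hY⟩ := hx0
  have h1 : g₁ = 1 := by
    apply Subtype.ext
    rw [hx, hX, Matrix.SpecialLinearGroup.coe_one, Matrix.one_fin_two]
  have h2 : g₂ = 1 := by
    apply Subtype.ext
    rw [hy, hY, Matrix.SpecialLinearGroup.coe_one, Matrix.one_fin_two]
  refine ⟨h1, h2, ?_⟩
  rw [h1, h2] at heq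
  simpa using heq

end TPPsec

theorem stmt_7 (q : ℕ) (hq : IsPrimePow q) (F : Type*) [Field F] [Fintype F]
    (hF : Fintype.card F = q ^ 2) :
    (∃ K₁ K₂ K₃ : Subgroup (Matrix.SpecialLinearGroup (Fin 2) F),
      (K₁ : Set (Matrix.SpecialLinearGroup (Fin 2) F)) = sl2H₁ F ∧
      (K₂ : Set (Matrix.SpecialLinearGroup (Fin 2) F)) = sl2H₂ F ∧
      (K₃ : Set (Matrix.SpecialLinearGroup (Fin 2) F)) = su2 F q) ∧
    (sl2H₁ F).ncard = q ^ 2 ∧ (sl2H₂ F).ncard = q ^ 2 ∧ (su2 F q).ncard = q ^ 3 - q ∧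
    TPP (sl2H₁ F) (sl2H₂ F) (su2 F q) ∧
    Nat.card (Matrix.SpecialLinearGroup (Fin 2) F) = q ^ 6 - q ^ 2 ∧
    Realizes (Matrix.SpecialLinearGroup (Fin 2) F) (q ^ 2) (q ^ 2) (q ^ 3 - q) := by
  refine ⟨⟨sl2K₁ F, sl2K₂ F, sl2K₃ hq hF, rfl, rfl, rfl⟩, sl2H₁_ncard hF, sl2H₂_ncard hF,
    su2_ncard hq hF, tpp_hold hq hF, ?_, ?_⟩
  · rw [card_SL2, hF, ← pow_mul]
  · exact ⟨sl2H₁ F, sl2H₂ F, su2 F q, Set.toFinite _, Set.toFinite _, Set.toFinite _,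
      sl2H₁_ncard hF, sl2H₂_ncard hF, su2_ncard hq hF, tpp_hold hq hF⟩
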